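/- Any two arcs are homeomorphic: any metrizable continuum with exactly two non-separating points is homeomorphic to the closed unit interval [0,1]. -/

import Mathlib

open Set

section Aux

variable {X : Type*} [TopologicalSpace X] [ConnectedSpace X]

/-- A side of a separation of the complement of a point, together with the point,
is preconnected. -/
lemma arc_aux_conn {p : X} {U V : Set X} (hU : IsOpen U) (hV : IsOpen V)
    (hd : Disjoint U V) (hu : U ∪ V = {p}ᶜ) : IsPreconnected (U ∪ {p}) := by
  have hpU : p ∉ U := fun h => by
    have : p ∈ U ∪ V := Or.inl h
    rw [hu] at this; exact this rfl
  have hpV : p ∉ V := fun h => by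
    have : p ∈ U ∪ V := Or.inr h
    rw [hu] at this; exact this rfl
  have hclosed : IsClosed (U ∪ {p}) := by
    have hUV : U ∪ {p} = Vᶜ := by
      apply Subset.antisymm
      · rintro x (hx | hx)
        · exact fun hxV => (hd.ne_of_mem hx hxV) rfl
        · rw [mem_singleton_iff] at hx; subst hx; exact hpV
      · intro x hx
        by_cases hxp : x = p
        · exact Or.inr (by simp [hxp])
        · have : x ∈ U ∪ V := by rw [hu]; exact hxp
          rcases this with h | h
          · exact Or.inl h
          · exact absurd h hx
    rw [hUV]
    exact hV.isClosed_compl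
  by_contra h
  have key : ∀ w1 w2 : Set X, IsOpen w1 → IsOpen w2 → (U ∪ {p}) ⊆ w1 ∪ w2 →
      ((U ∪ {p}) ∩ w2).Nonempty → (U ∪ {p}) ∩ (w1 ∩ w2) = ∅ → p ∈ w1 → False := by
    intro w1 w2 hw1 hw2 hcov hne2 hempty hpw1
    set D := (U ∪ {p}) ∩ w2 with hD
    have hDU : D ⊆ U := by
      rintro x ⟨hx1 | hx1, hx2⟩
      · exact hx1
      · have hxp : x = p := mem_singleton_iff.mp hx1
        exact absurd (show x ∈ (U ∪ {p}) ∩ (w1 ∩ w2) from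
            ⟨Or.inr hx1, by rw [hxp]; exact hpw1, hx2⟩)
          (by rw [hempty]; exact notMem_empty x)
    have hDopen : IsOpen D := by
      have hDeq : D = U ∩ w2 := by
        apply Subset.antisymm
        · exact fun x hx => ⟨hDU hx, hx.2⟩
        · exact fun x hx => ⟨Or.inl hx.1, hx.2⟩
      rw [hDeq]; exact hU.inter hw2
    have hDclosed : IsClosed D := by
      have hDeq : D = (U ∪ {p}) ∩ w1ᶜ := by
        apply Subset.antisymm
        · rintro x ⟨hx1, hx2⟩
          refine ⟨hx1, fun hxw1 => ?_⟩
          exact absurd (show x ∈ (U ∪ {p}) ∩ (w1 ∩ w2) from ⟨hx1, hxw1, hx2⟩)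
            (by rw [hempty]; exact notMem_empty x)
        · rintro x ⟨hx1, hx2⟩
          rcases hcov hx1 with h | h
          · exact absurd h hx2
          · exact ⟨hx1, h⟩
      rw [hDeq]; exact hclosed.inter hw1.isClosed_compl
    rcases isClopen_iff.mp ⟨hDclosed, hDopen⟩ with hempty' | huniv
    · rcases hne2 with ⟨x, hx⟩
      rw [hempty'] at hx; exact notMem_empty x hx
    · have : p ∈ D := by rw [huniv]; trivial
      exact hpU (hDU this)
  rw [IsPreconnected] at h
  push_neg at h
  obtain ⟨w1, w2, hw1, hw2, hcov, hne1, hne2, hdisj⟩ := h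
  rcases hcov (Or.inr rfl : p ∈ U ∪ {p}) with hp | hp
  · exact key w1 w2 hw1 hw2 hcov hne2 hdisj hp
  · refine key w2 w1 hw2 hw1 (by rw [union_comm w2 w1]; exact hcov) hne1 ?_ hp
    rw [inter_comm w2 w1]; exact hdisj

/-- A preconnected set avoiding both open sets' common part lies in one side. -/
lemma arc_aux_side {U V C : Set X} (hU : IsOpen U) (hV : IsOpen V)
    (hd : Disjoint U V) (hsub : C ⊆ U ∪ V) (hC : IsPreconnected C)
    (hne : (C ∩ U).Nonempty) : C ⊆ U := by
  intro x hx
  rcases hsub hx with h | h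
  · exact h
  · exfalso
    obtain ⟨z, hz⟩ := hC U V hU hV hsub hne ⟨x, hx, h⟩
    exact (hd.ne_of_mem hz.2.1 hz.2.2) rfl

/-- Zorn argument: if a separation of `X \ {p}` has `a` on one side, and every point of the
other side `V` admits a separation of its complement with `a` on one side, contradiction. -/
lemma arc_aux_noncut [CompactSpace X] {p aa : X} {U V : Set X} (hU : IsOpen U) (hV : IsOpen V)
    (hd : Disjoint U V) (hu : U ∪ V = {p}ᶜ) (haU : aa ∈ U) (hVne : V.Nonempty)
    (hcut : ∀ q ∈ V, ∃ P Q : Set X, IsOpen P ∧ IsOpen Q ∧ Disjoint P Q ∧ P ∪ Q = {q}ᶜ ∧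
      aa ∈ P ∧ Q.Nonempty) : False := by
  choose! P Q hP hQ hdq huq haP hQne using hcut
  have hUp : IsPreconnected (U ∪ {p}) := arc_aux_conn hU hV hd hu
  have hUPq : ∀ q ∈ V, U ∪ {p} ⊆ P q := by
    intro q hq
    have h1 : U ∪ {p} ⊆ P q ∪ Q q := by
      rw [huq q hq]
      rintro x (hx | hx)
      · exact fun hxq => (hd.ne_of_mem hx (by rwa [← mem_singleton_iff.mp hxq] at hq)) rfl
      · rw [mem_singleton_iff] at hx; subst hx
        intro hxq
        rw [mem_singleton_iff] at hxq; subst hxq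
        have : x ∈ U ∪ V := Or.inr hq
        rw [hu] at this; exact this rfl
    exact arc_aux_side (hP q hq) (hQ q hq) (hdq q hq) h1 hUp ⟨aa, Or.inl haU, haP q hq⟩
  have hQV : ∀ q ∈ V, Q q ⊆ V := by
    intro q hq x hx
    have hxP : x ∉ U ∪ {p} := fun h => (hdq q hq).ne_of_mem (hUPq q hq h) hx rfl
    have hxne : x ≠ p := fun h => hxP (Or.inr (by simp [h]))
    have : x ∈ U ∪ V := by rw [hu]; exact hxne
    rcases this with h | h
    · exact absurd (Or.inl h) hxP
    · exact h
  have hnest : ∀ q ∈ V, ∀ q' ∈ Q q, Q q' ∪ {q'} ⊆ Q q ∧ q ∉ Q q' := by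
    intro q hq q' hq'
    have hq'V : q' ∈ V := hQV q hq hq'
    have hPconn : IsPreconnected (P q ∪ {q}) := by
      refine arc_aux_conn (hP q hq) (hQ q hq) (hdq q hq) (huq q hq)
    have hsub1 : P q ∪ {q} ⊆ P q' ∪ Q q' := by
      rw [huq q' hq'V]
      rintro x (hx | hx)
      · exact fun hxq => (hdq q hq).ne_of_mem hx (by rwa [← mem_singleton_iff.mp hxq] at hq') rfl
      · rw [mem_singleton_iff] at hx; subst hx
        intro hxq
        rw [mem_singleton_iff] at hxq; subst hxq
        have : x ∈ P x ∪ Q x := Or.inr hq'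
        rw [huq x hq] at this; exact this rfl
    have hPP : P q ∪ {q} ⊆ P q' :=
      arc_aux_side (hP q' hq'V) (hQ q' hq'V) (hdq q' hq'V) hsub1 hPconn
        ⟨aa, Or.inl (haP q hq), haP q' hq'V⟩
    constructor
    · rintro x (hx | hx)
      · have hxP : x ∉ P q ∪ {q} := fun h => (hdq q' hq'V).ne_of_mem (hPP h) hx rfl
        have hxq : x ≠ q := fun h => hxP (Or.inr (by simp [h]))
        have : x ∈ P q ∪ Q q := by rw [huq q hq]; exact hxq
        rcases this with h | h
        · exact absurd (Or.inl h) hxP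
        · exact h
      · rw [mem_singleton_iff] at hx; subst hx; exact hq'
    · intro hqQ
      exact (hdq q' hq'V).ne_of_mem (hPP (Or.inr rfl)) hqQ rfl
  set K : X → Set X := fun q => Q q ∪ {q} with hK
  have hKclosed : ∀ q ∈ V, IsClosed (K q) := by
    intro q hq
    have : K q = (P q)ᶜ := by
      apply Subset.antisymm
      · rintro x (hx | hx)
        · exact fun hxP => (hdq q hq).ne_of_mem hxP hx rfl
        · rw [mem_singleton_iff] at hx; subst hx
          intro hxP
          have : x ∈ P x ∪ Q x := Or.inl hxP
          rw [huq x hq] at this; exact this rfl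
      · intro x hx
        by_cases hxq : x = q
        · exact Or.inr (by simp [hxq])
        · have : x ∈ P q ∪ Q q := by rw [huq q hq]; exact hxq
          rcases this with h | h
          · exact absurd h hx
          · exact Or.inl h
    rw [this]; exact (hP q hq).isClosed_compl
  have hKV : ∀ q ∈ V, K q ⊆ V := by
    intro q hq
    rintro x (hx | hx)
    · exact hQV q hq hx
    · rw [mem_singleton_iff] at hx; subst hx; exact hq
  have hKmono : ∀ q ∈ V, ∀ q' ∈ Q q, K q' ⊆ Q q := by
    intro q hq q' hq'
    exact (hnest q hq q' hq').1
  set S : Set (Set X) := {s | ∃ q ∈ V, s = K q} with hS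
  obtain ⟨q0, hq0⟩ := hVne
  have hzorn := zorn_superset_nonempty S ?_ (K q0) ⟨q0, hq0, rfl⟩
  · obtain ⟨m, _, hmS, hmmin⟩ := hzorn
    obtain ⟨qm, hqm, rfl⟩ := hmS
    obtain ⟨q', hq'⟩ := hQne qm hqm
    have hq'V : q' ∈ V := hQV qm hqm hq'
    have hsub : K q' ⊆ K qm := (hKmono qm hqm q' hq').trans subset_union_left
    have := hmmin (⟨q', hq'V, rfl⟩ : K q' ∈ S) hsub
    have hqmK : qm ∈ K q' := this (Or.inr rfl)
    rcases hqmK with h | h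
    · exact (hnest qm hqm q' hq').2 h
    · rw [mem_singleton_iff] at h
      have : q' ≠ qm := by
        intro he; subst he
        have : q' ∈ P q' ∪ Q q' := Or.inr hq'
        rw [huq q' hq'V] at this; exact this rfl
      exact this h.symm
  · intro c hcS hchain hcne
    have hcc : ∀ s ∈ c, ∃ q ∈ V, s = K q := fun s hs => hcS hs
    have hne' : Nonempty c := hcne.to_subtype
    have hdir : Directed (· ⊇ ·) (fun s : c => (s : Set X)) := by
      intro i j
      rcases hchain.total i.2 j.2 with h | h
      · exact ⟨i, le_refl _, h⟩
      · exact ⟨j, h, le_refl _⟩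
    have hinter : (⋂ s : c, (s : Set X)).Nonempty := by
      apply IsCompact.nonempty_iInter_of_directed_nonempty_isCompact_isClosed _ hdir
      · intro i
        obtain ⟨q, hq, he⟩ := hcc i i.2
        rw [he]; exact ⟨q, Or.inr rfl⟩
      · intro i
        obtain ⟨q, hq, he⟩ := hcc i i.2
        rw [he]; exact (hKclosed q hq).isCompact
      · intro i
        obtain ⟨q, hq, he⟩ := hcc i i.2
        rw [he]; exact hKclosed q hq
    obtain ⟨z, hz⟩ := hinter
    simp only [mem_iInter] at hz
    have hzV : z ∈ V := by
      obtain ⟨s, hs⟩ := hcne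
      obtain ⟨q, hq, he⟩ := hcc s hs
      exact hKV q hq (by rw [← he]; exact hz ⟨s, hs⟩)
    refine ⟨K z, ⟨z, hzV, rfl⟩, ?_⟩
    intro s hs
    obtain ⟨q, hq, he⟩ := hcc s hs
    have hzK : z ∈ K q := by rw [← he]; exact hz ⟨s, hs⟩
    rw [he]
    rcases hzK with h | h
    · exact (hKmono q hq z h).trans subset_union_left
    · rw [mem_singleton_iff] at h; subst h; exact le_refl _

end Aux

open unitInterval

/-- Any two arcs are homeomorphic: any metrizable continuum with exactly two
non-separating points is homeomorphic to the closed unit interval. -/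
theorem stmt_5 (X : Type*) [TopologicalSpace X] [CompactSpace X] [T2Space X]
    [ConnectedSpace X] [TopologicalSpace.MetrizableSpace X]
    (a b : X) (hab : a ≠ b)
    (htwo : ∀ x : X, IsPreconnected ({x}ᶜ : Set X) ↔ (x = a ∨ x = b)) :
    Nonempty (X ≃ₜ unitInterval) := by
  classical
  -- Step 0: every cut point admits a separation with `a` on one side.
  have hdiscon : ∀ x : X, x ≠ a → x ≠ b → ∃ U V : Set X, IsOpen U ∧ IsOpen V ∧
      Disjoint U V ∧ U ∪ V = {x}ᶜ ∧ a ∈ U ∧ V.Nonempty := by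
    intro x hxa hxb
    have h : ¬ IsPreconnected ({x}ᶜ : Set X) := fun h => by
      rcases (htwo x).mp h with h' | h'
      exacts [hxa h', hxb h']
    rw [IsPreconnected] at h; push_neg at h
    obtain ⟨u, v, hu, hv, hcov, hne1, hne2, hdisj⟩ := h
    have hU₀ : IsOpen ({x}ᶜ ∩ u) := isOpen_compl_singleton.inter hu
    have hV₀ : IsOpen ({x}ᶜ ∩ v) := isOpen_compl_singleton.inter hv
    have hunion : ({x}ᶜ ∩ u) ∪ ({x}ᶜ ∩ v) = {x}ᶜ := by
      apply Subset.antisymm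
      · rintro y (h | h) <;> exact h.1
      · intro y hy
        rcases hcov hy with h | h
        exacts [Or.inl ⟨hy, h⟩, Or.inr ⟨hy, h⟩]
    have hdisj' : Disjoint ({x}ᶜ ∩ u) ({x}ᶜ ∩ v) := by
      rw [Set.disjoint_left]
      intro y h1 h2
      exact absurd (show y ∈ {x}ᶜ ∩ (u ∩ v) from ⟨h1.1, h1.2, h2.2⟩)
        (by rw [hdisj]; exact notMem_empty y)
    have hax : a ∈ ({x}ᶜ ∩ u) ∪ ({x}ᶜ ∩ v) := by
      rw [hunion]
      exact fun h => hxa (mem_singleton_iff.mp h).symm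
    rcases hax with h | h
    · exact ⟨_, _, hU₀, hV₀, hdisj', hunion, h, hne2⟩
    · exact ⟨_, _, hV₀, hU₀, hdisj'.symm, by rw [union_comm]; exact hunion, h, hne1⟩
  -- Step 1: separation structure at every point, with `a` and `b` on opposite sides.
  have hsep : ∀ x : X, ∃ A B : Set X, IsOpen A ∧ IsOpen B ∧ Disjoint A B ∧ A ∪ B = {x}ᶜ ∧
      (x ≠ a → a ∈ A) ∧ (x ≠ b → b ∈ B) ∧ (x = a → A = ∅) ∧ (x = b → B = ∅) ∧
      IsPreconnected (A ∪ {x}) ∧ IsPreconnected (B ∪ {x}) := by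
    intro x
    by_cases hxa : x = a
    · subst hxa
      refine ⟨∅, {x}ᶜ, isOpen_empty, isOpen_compl_singleton, by simp, by rw [empty_union],
        fun h => absurd rfl h, fun _ => fun h => hab (mem_singleton_iff.mp h).symm,
        fun _ => rfl, fun h => absurd h hab, ?_, ?_⟩
      · rw [empty_union]; exact isPreconnected_singleton
      · rw [compl_union_self]; exact isPreconnected_univ
    · by_cases hxb : x = b
      · subst hxb
        refine ⟨{x}ᶜ, ∅, isOpen_compl_singleton, isOpen_empty, by simp, by rw [union_empty],
          fun _ => fun h => hab (mem_singleton_iff.mp h), fun h => absurd rfl h,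
          fun h => absurd h.symm hab, fun _ => rfl, ?_, ?_⟩
        · rw [compl_union_self]; exact isPreconnected_univ
        · rw [empty_union]; exact isPreconnected_singleton
      · obtain ⟨U, V, h1, h2, h3, h4, h5, h6⟩ := hdiscon x hxa hxb
        have hbV : b ∈ V := by
          have hbx : b ∈ U ∪ V := by
            rw [h4]; exact fun h => hxb (mem_singleton_iff.mp h).symm
          rcases hbx with hbU | h
          swap
          · exact h
          exfalso
          refine arc_aux_noncut h1 h2 h3 h4 h5 h6 ?_
          intro q hq
          have hqa : q ≠ a := fun h => (h3.ne_of_mem h5 (h ▸ hq)) rfl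
          have hqb : q ≠ b := fun h => (h3.ne_of_mem hbU (h ▸ hq)) rfl
          obtain ⟨P, Q, p1, p2, p3, p4, p5, p6⟩ := hdiscon q hqa hqb
          exact ⟨P, Q, p1, p2, p3, p4, p5, p6⟩
        exact ⟨U, V, h1, h2, h3, h4, fun _ => h5, fun _ => hbV, fun h => absurd h hxa,
          fun h => absurd h hxb, arc_aux_conn h1 h2 h3 h4,
          arc_aux_conn h2 h1 h3.symm (by rw [union_comm]; exact h4)⟩
  choose A B hAo hBo hABd hABu haA hbB hAa hBb hcA hcB using hsep
  -- basic facts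
  have hA_ne : ∀ x y, y ∈ A x → y ≠ x := fun x y hy he => by
    have h : y ∈ A x ∪ B x := Or.inl hy
    rw [hABu x] at h
    exact h (mem_singleton_iff.mpr he)
  have hB_ne : ∀ x y, y ∈ B x → y ≠ x := fun x y hy he => by
    have h : y ∈ A x ∪ B x := Or.inr hy
    rw [hABu x] at h
    exact h (mem_singleton_iff.mpr he)
  have hAb : A b = {b}ᶜ := by
    have h := hABu b
    rwa [hBb b rfl, union_empty] at h
  have hmemAB : ∀ x y, y ≠ x → y ∈ A x ∨ y ∈ B x := fun x y h => by
    have h' : y ∈ ({x}ᶜ : Set X) := h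
    rw [← hABu x] at h'
    exact h'
  have hsideA : ∀ x, x ≠ a → ∀ C : Set X, IsPreconnected C → (∀ y ∈ C, y ≠ x) → a ∈ C →
      C ⊆ A x := by
    intro x hxa C hC hCx haC
    refine arc_aux_side (hAo x) (hBo x) (hABd x) ?_ hC ⟨a, haC, haA x hxa⟩
    intro y hy
    rw [hABu x]
    exact hCx y hy
  have hsideB : ∀ x, x ≠ b → ∀ C : Set X, IsPreconnected C → (∀ y ∈ C, y ≠ x) → b ∈ C →
      C ⊆ B x := by
    intro x hxb C hC hCx hbC
    refine arc_aux_side (hBo x) (hAo x) (hABd x).symm ?_ hC ⟨b, hbC, hbB x hxb⟩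
    intro y hy
    rw [union_comm, hABu x]
    exact hCx y hy
  -- the order relation
  have hirr : ∀ x : X, x ∉ A x := fun x h => hA_ne x x h rfl
  have hasymm : ∀ x y : X, x ∈ A y → y ∈ A x → False := by
    intro x y hxy hyx
    have hyna : y ≠ a := fun h => by
      rw [h, hAa a rfl] at hxy; exact notMem_empty x hxy
    have hxna : x ≠ a := fun h => by
      rw [h, hAa a rfl] at hyx; exact notMem_empty y hyx
    have hynb : y ≠ b := by
      intro h
      rw [h] at hyx hxy
      have hxb : x ≠ b := hA_ne b x hxy
      exact (hABd x).ne_of_mem hyx (hbB x hxb) rfl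
    have hxnb : x ≠ b := by
      intro h
      rw [h] at hxy
      exact (hABd y).ne_of_mem hxy (hbB y hynb) rfl
    have hsub : B y ∪ {y} ⊆ B x := by
      refine hsideB x hxnb _ (hcB y) ?_ (Or.inl (hbB y hynb))
      rintro z (hz | hz)
      · exact fun he => (hABd y).ne_of_mem (he ▸ hxy) hz rfl
      · rw [mem_singleton_iff] at hz
        rw [hz]
        exact Ne.symm (hA_ne y x hxy)
    exact (hABd x).ne_of_mem hyx (hsub (Or.inr rfl)) rfl
  have hBtoA : ∀ x y, y ∈ B x → x ∈ A y := by
    intro x y hyB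
    have hyx : y ≠ x := hB_ne x y hyB
    by_cases hxa : x = a
    · subst hxa
      exact haA y hyx
    · have hya : y ≠ a := fun h => (hABd x).ne_of_mem (haA x hxa) (h ▸ hyB) rfl
      have hsub : A x ∪ {x} ⊆ A y := by
        refine hsideA y hya _ (hcA x) ?_ (Or.inl (haA x hxa))
        rintro z (hz | hz)
        · exact fun he => (hABd x).ne_of_mem (he ▸ hz) hyB rfl
        · rw [mem_singleton_iff] at hz
          rw [hz]
          exact Ne.symm hyx
      exact hsub (Or.inr rfl)
  have htri : ∀ x y : X, x ≠ y → x ∈ A y ∨ y ∈ A x := by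
    intro x y hxy
    by_cases h : x ∈ A y
    · exact Or.inl h
    · exact Or.inr (hBtoA y x ((hmemAB y x hxy).resolve_left h))
  have htrans : ∀ x y z : X, x ∈ A y → y ∈ A z → x ∈ A z := by
    intro x y z hxy hyz
    have hza : z ≠ a := fun h => by
      rw [h, hAa a rfl] at hyz; exact notMem_empty _ hyz
    have hya : y ≠ a := fun h => by
      rw [h, hAa a rfl] at hxy; exact notMem_empty _ hxy
    by_cases hzb : z = b
    · show x ∈ A z
      rw [hzb, hAb]
      intro h
      rw [mem_singleton_iff] at h
      rw [h] at hxy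
      rw [hzb] at hyz
      have hynb : y ≠ b := hA_ne b y hyz
      exact (hABd y).ne_of_mem hxy (hbB y hynb) rfl
    · have hzy : z ∉ A y := fun h => hasymm y z hyz h
      have hsub : A y ∪ {y} ⊆ A z := by
        refine hsideA z hza _ (hcA y) ?_ (Or.inl (haA y hya))
        rintro w (hw | hw)
        · exact fun he => hzy (he ▸ hw)
        · rw [mem_singleton_iff] at hw
          rw [hw]
          exact hA_ne z y hyz
      exact hsub (Or.inl hxy)
  haveI hSTO : IsStrictTotalOrder X (fun x y : X => x ∈ A y) :=
    { irrefl := hirr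
      trans := htrans
      trichotomous := fun x y h1 h2 =>
        by_contra fun h => (htri x y h).elim h1 h2 }
  letI : LinearOrder X := linearOrderOfSTO (fun x y : X => x ∈ A y)
  have hlt : ∀ x y : X, x < y ↔ x ∈ A y := fun x y => Iff.rfl
  have hle : ∀ x y : X, x ≤ y ↔ x = y ∨ x ∈ A y := fun x y => Iff.rfl
  have hbot : ∀ x : X, a ≤ x := fun x => by
    by_cases h : x = a
    · exact (hle a x).mpr (Or.inl h.symm)
    · exact (hle a x).mpr (Or.inr (haA x h))
  have htop : ∀ x : X, x ≤ b := fun x => by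
    by_cases h : x = b
    · exact (hle x b).mpr (Or.inl h)
    · refine (hle x b).mpr (Or.inr ?_)
      show x ∈ A b
      rw [hAb]
      exact fun hh => h (mem_singleton_iff.mp hh)
  have hIio : ∀ y : X, Set.Iio y = A y := fun y => by
    ext x
    simp only [Set.mem_Iio]
    exact hlt x y
  have hIoi : ∀ x : X, Set.Ioi x = B x := fun x => by
    ext y
    simp only [Set.mem_Ioi]
    constructor
    · intro h
      have h' : x ∈ A y := (hlt x y).mp h
      have hyx : y ≠ x := fun he => hirr x (he ▸ h')
      rcases hmemAB x y hyx with h'' | h''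
      · exact absurd h'' (fun hh => hasymm x y h' hh)
      · exact h''
    · exact fun h => (hlt x y).mpr (hBtoA x y h)
  have hOpenIio : ∀ y : X, IsOpen (Set.Iio y) := fun y => by rw [hIio]; exact hAo y
  have hOpenIoi : ∀ x : X, IsOpen (Set.Ioi x) := fun x => by rw [hIoi]; exact hBo x
  have haltb : a < b := lt_of_le_of_ne (hbot b) hab
  have hdense : ∀ x y : X, x < y → ∃ z, x < z ∧ z < y := by
    intro x y hxy
    by_contra h
    push_neg at h
    have hcov : Set.Iio y ∪ Set.Ioi x = Set.univ := by
      ext z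
      simp only [Set.mem_union, Set.mem_Iio, Set.mem_Ioi, Set.mem_univ, iff_true]
      rcases lt_or_ge z y with h' | h'
      · exact Or.inl h'
      · exact Or.inr (lt_of_lt_of_le hxy h')
    obtain ⟨z, -, hz1, hz2⟩ := isPreconnected_univ (Set.Iio y) (Set.Ioi x) (hOpenIio y)
      (hOpenIoi x) (by rw [hcov]) ⟨x, trivial, hxy⟩ ⟨y, trivial, hxy⟩
    exact absurd hz1 (not_lt.mpr (h z hz2))
  -- a countable dense set, order-dense in the interior
  letI : MetricSpace X := TopologicalSpace.metrizableSpaceMetric X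
  obtain ⟨D, hDc, hDd⟩ := TopologicalSpace.exists_countable_dense X
  set Dset : Set X := D \ {a, b} with hDsetdef
  have hDget : ∀ x y : X, x < y → ∃ d ∈ Dset, x < d ∧ d < y := by
    intro x y hxy
    obtain ⟨z, hz1, hz2⟩ := hdense x y hxy
    have hopen : IsOpen (Set.Ioo x y) := by
      rw [← Set.Iio_inter_Ioi]
      exact (hOpenIio y).inter (hOpenIoi x)
    obtain ⟨d, hdD, hd⟩ := hDd.exists_mem_open hopen ⟨z, hz1, hz2⟩
    refine ⟨d, ⟨hdD, ?_⟩, hd.1, hd.2⟩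
    rintro (rfl | rfl)
    · exact absurd hd.1 (not_lt.mpr (hbot x))
    · exact absurd hd.2 (not_lt.mpr (htop y))
  have hne_a : ∀ d : ↥Dset, (d : X) ≠ a := fun d h => d.2.2 (by simp [h])
  have hne_b : ∀ d : ↥Dset, (d : X) ≠ b := fun d h => d.2.2 (by simp [h])
  haveI : Countable ↥Dset := (hDc.mono Set.diff_subset).to_subtype
  haveI : Nonempty ↥Dset := by
    obtain ⟨d, hd, -⟩ := hDget a b haltb
    exact ⟨⟨d, hd⟩⟩
  haveI : DenselyOrdered ↥Dset := by
    constructor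
    rintro ⟨d1, h1⟩ ⟨d2, h2⟩ h
    obtain ⟨d, hd, hlt1, hlt2⟩ := hDget d1 d2 (Subtype.mk_lt_mk.mp h)
    exact ⟨⟨d, hd⟩, Subtype.mk_lt_mk.mpr hlt1, Subtype.mk_lt_mk.mpr hlt2⟩
  haveI : NoMinOrder ↥Dset := by
    constructor
    rintro ⟨d, hd⟩
    have had : a < d := lt_of_le_of_ne (hbot d) (fun h => hne_a ⟨d, hd⟩ h.symm)
    obtain ⟨d', hd', h1, h2⟩ := hDget a d had
    exact ⟨⟨d', hd'⟩, Subtype.mk_lt_mk.mpr h2⟩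
  haveI : NoMaxOrder ↥Dset := by
    constructor
    rintro ⟨d, hd⟩
    have hdb : d < b := lt_of_le_of_ne (htop d) (hne_b ⟨d, hd⟩)
    obtain ⟨d', hd', h1, h2⟩ := hDget d b hdb
    exact ⟨⟨d', hd'⟩, Subtype.mk_lt_mk.mpr h1⟩
  -- rationals in (0,1)
  haveI : Nonempty ↥(Set.Ioo (0:ℚ) 1) := ⟨⟨1/2, by norm_num⟩⟩
  obtain ⟨g⟩ := Order.iso_of_countable_dense (α := ↥Dset) (β := ↥(Set.Ioo (0:ℚ) 1))
  set val : ↥(Set.Ioo (0:ℚ) 1) → ℝ := fun q => ((q : ℚ) : ℝ) with hvaldef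
  have hval01 : ∀ q, 0 < val q ∧ val q < 1 := fun q =>
    ⟨show (0:ℝ) < ((q:ℚ):ℝ) by exact_mod_cast q.2.1,
     show ((q:ℚ):ℝ) < 1 by exact_mod_cast q.2.2⟩
  have hvalmono : ∀ q1 q2, q1 < q2 → val q1 < val q2 := fun q1 q2 h => by
    have hqq : (q1 : ℚ) < (q2 : ℚ) := h
    show ((q1:ℚ):ℝ) < ((q2:ℚ):ℝ)
    exact_mod_cast hqq
  set S : X → Set ℝ := fun x => insert 0 ((fun d => val (g d)) '' {d : ↥Dset | (d : X) < x})
    with hSdef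
  have hSne : ∀ x, (S x).Nonempty := fun x => ⟨0, Set.mem_insert 0 _⟩
  have hSbdd : ∀ x, BddAbove (S x) := fun x => ⟨1, by
    rintro t (rfl | ⟨d, -, rfl⟩)
    · norm_num
    · exact le_of_lt (hval01 _).2⟩
  set f : X → ℝ := fun x => sSup (S x) with hfdef
  have hf0 : ∀ x, 0 ≤ f x := fun x => le_csSup (hSbdd x) (Set.mem_insert 0 _)
  have hf1 : ∀ x, f x ≤ 1 := fun x => csSup_le (hSne x) (by
    rintro t (rfl | ⟨d, -, rfl⟩)
    · norm_num
    · exact le_of_lt (hval01 _).2)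
  have hmemS : ∀ (x : X) (d : ↥Dset), (d : X) < x → val (g d) ≤ f x := fun x d hd =>
    le_csSup (hSbdd x) (Or.inr ⟨d, hd, rfl⟩)
  have hfle : ∀ (x : X) (c : ℝ), 0 ≤ c → (∀ d : ↥Dset, (d : X) < x → val (g d) ≤ c) →
      f x ≤ c := fun x c h0 hc => csSup_le (hSne x) (by
    rintro t (rfl | ⟨d, hd, rfl⟩)
    · exact h0
    · exact hc d hd)
  have hstrict : StrictMono f := by
    intro x y hxy
    obtain ⟨d1, hd1, h1, h2⟩ := hDget x y hxy
    obtain ⟨d2, hd2, h3, h4⟩ := hDget d1 y h2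
    have e1 : f x ≤ val (g ⟨d1, hd1⟩) := by
      refine hfle x _ (le_of_lt (hval01 _).1) ?_
      intro d hd
      exact le_of_lt (hvalmono _ _ (g.strictMono (Subtype.mk_lt_mk.mpr (lt_trans hd h1))))
    calc f x ≤ val (g ⟨d1, hd1⟩) := e1
      _ < val (g ⟨d2, hd2⟩) := hvalmono _ _ (g.strictMono (Subtype.mk_lt_mk.mpr h3))
      _ ≤ f y := hmemS y ⟨d2, hd2⟩ h4
  have hinj : Function.Injective f := by
    intro x y h
    rcases lt_trichotomy x y with h' | h' | h'
    · exact absurd h (ne_of_lt (hstrict h'))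
    · exact h'
    · exact absurd h.symm (ne_of_lt (hstrict h'))
  have hfa : f a = 0 := by
    have hSa : S a = {0} := by
      apply Subset.antisymm
      · rintro t (rfl | ⟨d, hd, rfl⟩)
        · rfl
        · exact absurd hd (not_lt.mpr (hbot d))
      · intro t ht
        rw [mem_singleton_iff] at ht
        subst ht
        exact Set.mem_insert 0 _
    show sSup (S a) = 0
    rw [hSa, csSup_singleton]
  have hfb : f b = 1 := by
    refine le_antisymm (hf1 b) ?_
    by_contra h
    push_neg at h
    obtain ⟨q, hq1, hq2⟩ := exists_rat_btwn h
    have hq0 : (0 : ℚ) < q := by exact_mod_cast lt_of_le_of_lt (hf0 b) hq1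
    have hq1' : q < 1 := by exact_mod_cast hq2
    set d := g.symm ⟨q, hq0, hq1'⟩ with hddef
    have hdb : (d : X) < b := lt_of_le_of_ne (htop d) (hne_b d)
    have hle' : val (g d) ≤ f b := hmemS b d hdb
    rw [g.apply_symm_apply] at hle'
    have : (q : ℝ) ≤ f b := hle'
    linarith
  have hcont : Continuous f := by
    have hgen : ∀ s ∈ {s : Set ℝ | ∃ t, s = Set.Ioi t ∨ s = Set.Iio t},
        IsOpen (f ⁻¹' s) := by
      rintro s ⟨t, rfl | rfl⟩
      · by_cases ht : 0 ≤ t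
        · have heq : f ⁻¹' Set.Ioi t = ⋃ (d : ↥Dset) (_ : t < val (g d)), Set.Ioi (d : X) := by
            ext x
            simp only [Set.mem_preimage, Set.mem_Ioi, Set.mem_iUnion]
            constructor
            · intro hx
              obtain ⟨s', hs', hts⟩ := exists_lt_of_lt_csSup (hSne x) hx
              rcases hs' with rfl | ⟨d, hd, rfl⟩
              · exact absurd hts (not_lt.mpr ht)
              · exact ⟨d, hts, hd⟩
            · rintro ⟨d, h1, h2⟩
              exact lt_of_lt_of_le h1 (hmemS x d h2)
          rw [heq]
          exact isOpen_iUnion fun d => isOpen_iUnion fun _ => hOpenIoi _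
        · have heq : f ⁻¹' Set.Ioi t = Set.univ := by
            ext x
            simp only [Set.mem_preimage, Set.mem_Ioi, Set.mem_univ, iff_true]
            exact lt_of_lt_of_le (not_le.mp ht) (hf0 x)
          rw [heq]
          exact isOpen_univ
      · rcases le_or_gt t 0 with ht | ht
        · have heq : f ⁻¹' Set.Iio t = ∅ := by
            ext x
            simp only [Set.mem_preimage, Set.mem_Iio, Set.mem_empty_iff_false, iff_false,
              not_lt]
            exact le_trans ht (hf0 x)
          rw [heq]
          exact isOpen_empty
        · rcases lt_or_ge 1 t with ht1 | ht1
          · have heq : f ⁻¹' Set.Iio t = Set.univ := by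
              ext x
              simp only [Set.mem_preimage, Set.mem_Iio, Set.mem_univ, iff_true]
              exact lt_of_le_of_lt (hf1 x) ht1
            rw [heq]
            exact isOpen_univ
          · have heq : f ⁻¹' Set.Iio t = ⋃ (d : ↥Dset) (_ : val (g d) < t), Set.Iio (d : X) := by
              ext x
              simp only [Set.mem_preimage, Set.mem_Iio, Set.mem_iUnion]
              constructor
              · intro hx
                obtain ⟨q, hq1, hq2⟩ := exists_rat_btwn hx
                obtain ⟨q', hq1', hq2'⟩ := exists_rat_btwn hq1
                have hq'q : q' < q := by exact_mod_cast hq2'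
                have hq'0 : (0 : ℚ) < q' := by exact_mod_cast lt_of_le_of_lt (hf0 x) hq1'
                have hq1r : (q : ℝ) < 1 := lt_of_lt_of_le hq2 ht1
                have hqlt1 : q < 1 := by exact_mod_cast hq1r
                have hq'1 : q' < 1 := lt_trans hq'q hqlt1
                have hq0 : (0 : ℚ) < q := lt_trans hq'0 hq'q
                set dq := g.symm ⟨q, hq0, hqlt1⟩ with hdqdef
                set dq' := g.symm ⟨q', hq'0, hq'1⟩ with hdq'def
                have hltd : dq' < dq := g.symm.strictMono (Subtype.mk_lt_mk.mpr hq'q)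
                refine ⟨dq, ?_, ?_⟩
                · rw [g.apply_symm_apply]
                  exact hq2
                · by_contra hc
                  push_neg at hc
                  have hlt2 : (dq' : X) < x := lt_of_lt_of_le (Subtype.coe_lt_coe.mpr hltd) hc
                  have h5 := hmemS x dq' hlt2
                  rw [g.apply_symm_apply] at h5
                  have : (q' : ℝ) ≤ f x := h5
                  linarith
              · rintro ⟨d, h1, h2⟩
                refine lt_of_le_of_lt (hfle x (val (g d)) (le_of_lt (hval01 _).1) ?_) h1
                intro d' hd'
                exact le_of_lt (hvalmono _ _ (g.strictMono
                  (Subtype.mk_lt_mk.mpr (lt_trans hd' h2))))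
            rw [heq]
            exact isOpen_iUnion fun d => isOpen_iUnion fun _ => hOpenIio _
    have hcont' := continuous_generateFrom_iff.mpr hgen
    have heqt : (by infer_instance : TopologicalSpace ℝ) = TopologicalSpace.generateFrom
        {s : Set ℝ | ∃ t, s = Set.Ioi t ∨ s = Set.Iio t} :=
      OrderTopology.topology_eq_generate_intervals
    rw [← heqt] at hcont'; exact hcont'
  have hrange : ∀ t ∈ Set.Icc (0:ℝ) 1, ∃ x, f x = t := by
    intro t ht
    have hiv := intermediate_value_univ a b hcont
    rw [hfa, hfb] at hiv
    exact hiv ht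
  have hsurj' : Function.Surjective (fun x => (⟨f x, hf0 x, hf1 x⟩ : unitInterval)) := by
    rintro ⟨t, ht⟩
    obtain ⟨x, hx⟩ := hrange t ht
    exact ⟨x, Subtype.ext hx⟩
  have hinj' : Function.Injective (fun x => (⟨f x, hf0 x, hf1 x⟩ : unitInterval)) :=
    fun x y h => hinj (congrArg Subtype.val h)
  set e := Equiv.ofBijective _ ⟨hinj', hsurj'⟩ with hedef
  have hce : Continuous e := Continuous.subtype_mk hcont _
  exact ⟨hce.homeoOfEquivCompactToT2⟩
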